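/- Let K be a finite field, let V be a nonzero finite-dimensional vector space over K, and let U_1, …, U_m be proper subspaces of V. If V = U_1 ∪ ⋯ ∪ U_m, then m > |K|. -/

import Mathlib

/-- If a nonzero finite-dimensional vector space `V` over a finite field `K` is covered by
proper subspaces `U 1, …, U m`, then `m > |K|`. -/
theorem covering_by_proper_subspaces_gt_card
    (K V : Type*) [Field K] [Fintype K] [AddCommGroup V] [Module K V]
    [FiniteDimensional K V] [Nontrivial V]
    {m : ℕ} (U : Fin m → Submodule K V)
    (hproper : ∀ i, U i < ⊤)
    (hcover : ∀ v : V, ∃ i, v ∈ U i) :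
    m > Fintype.card K := by
  have : Finite V := Module.finite_of_finite K
  have : Fintype V := Fintype.ofFinite V
  classical
  set q := Fintype.card K with hq
  set n := Module.finrank K V with hn
  have hq2 : 2 ≤ q := Fintype.one_lt_card
  have hn1 : 1 ≤ n := Module.finrank_pos
  have hcardV : Fintype.card V = q ^ n := Module.card_eq_pow_finrank
  -- each proper subspace has at most q^(n-1) elements
  have hUi : ∀ i, Fintype.card (U i) ≤ q ^ (n - 1) := by
    intro i
    have h1 : Fintype.card (U i) = q ^ Module.finrank K (U i) := Module.card_eq_pow_finrank
    have h2 : Module.finrank K (U i) < n := Submodule.finrank_lt (hproper i).ne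
    rw [h1]
    exact Nat.pow_le_pow_right (by omega) (by omega)
  -- counting argument via Finsets
  have hsub : (Finset.univ.erase (0 : V)) ⊆
      Finset.univ.biUnion (fun i : Fin m =>
        ((U i : Set V).toFinset.erase (0 : V))) := by
    intro v hv
    obtain ⟨i, hi⟩ := hcover v
    refine Finset.mem_biUnion.mpr ⟨i, Finset.mem_univ _, ?_⟩
    exact Finset.mem_erase.mpr ⟨(Finset.mem_erase.mp hv).1, Set.mem_toFinset.mpr hi⟩
  have hcount := Finset.card_le_card hsub
  have hbi := Finset.card_biUnion_le (s := (Finset.univ : Finset (Fin m)))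
      (t := fun i => ((U i : Set V).toFinset.erase (0 : V)))
  have herase : (Finset.univ.erase (0 : V)).card = q ^ n - 1 := by
    rw [Finset.card_erase_of_mem (Finset.mem_univ _), Finset.card_univ, hcardV]
  have hterm : ∀ i : Fin m, ((U i : Set V).toFinset.erase (0 : V)).card ≤ q ^ (n - 1) - 1 := by
    intro i
    have h0 : (0 : V) ∈ (U i : Set V).toFinset := Set.mem_toFinset.mpr (U i).zero_mem
    rw [Finset.card_erase_of_mem h0]
    have hc : (U i : Set V).toFinset.card = Fintype.card (U i) := by
      simp [Set.toFinset_card]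
    have := hUi i
    omega
  have hsum : ∑ i : Fin m, ((U i : Set V).toFinset.erase (0 : V)).card
      ≤ m * (q ^ (n - 1) - 1) := by
    calc ∑ i : Fin m, ((U i : Set V).toFinset.erase (0 : V)).card
        ≤ ∑ _i : Fin m, (q ^ (n - 1) - 1) := Finset.sum_le_sum (fun i _ => hterm i)
      _ = m * (q ^ (n - 1) - 1) := by simp [mul_comm]
  have key : q ^ n - 1 ≤ m * (q ^ (n - 1) - 1) := by
    omega
  by_contra hle
  push_neg at hle
  have hm : m ≤ q := hle
  have h1 : q ^ n = q * q ^ (n - 1) := by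
    conv_lhs => rw [show n = 1 + (n - 1) by omega, pow_add, pow_one]
  have h2 : m * (q ^ (n - 1) - 1) ≤ q * (q ^ (n - 1) - 1) :=
    Nat.mul_le_mul_right _ hm
  have hp1 : 1 ≤ q ^ (n - 1) := Nat.one_le_pow _ _ (by omega)
  have h3 : q * (q ^ (n - 1) - 1) = q * q ^ (n - 1) - q := by
    rw [Nat.mul_sub, Nat.mul_one]
  have h4 : q ≤ q * q ^ (n - 1) := Nat.le_mul_of_pos_right _ hp1
  omega
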